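/- Let (X, Y) be standard bivariate normal with correlation ρ ∈ (-1, 1). Then P(X > 0, Y > 0) = 1/4 + arcsin(ρ)/(2π). -/

import Mathlib

open ProbabilityTheory MeasureTheory

open Real Set Filter in
private lemma radial_integral13 :
    ∫ r in Ioi (0:ℝ), r * Real.exp (-r ^ 2 / 2) = 1 := by
  have hderiv : ∀ x ∈ Ici (0:ℝ), HasDerivAt (fun r : ℝ => -Real.exp (-r ^ 2 / 2))
      (x * Real.exp (-x ^ 2 / 2)) x := by
    intro x _
    have h1 : HasDerivAt (fun r : ℝ => -r ^ 2 / 2) (-x) x := by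
      have h := ((hasDerivAt_pow 2 x).neg).div_const 2
      refine h.congr_deriv ?_
      push_cast
      ring
    have h2 := (h1.exp).neg
    refine h2.congr_deriv ?_
    ring
  have hint : IntegrableOn (fun x : ℝ => x * Real.exp (-x ^ 2 / 2)) (Ioi 0) := by
    have h := (integrable_mul_exp_neg_mul_sq (b := 1/2) (by norm_num)).integrableOn
      (s := Ioi (0:ℝ))
    refine h.congr_fun (fun x _ => by ring_nf) measurableSet_Ioi
  have htend : Tendsto (fun r : ℝ => -Real.exp (-r ^ 2 / 2)) atTop (nhds 0) := by
    rw [show (0:ℝ) = -0 by ring]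
    refine Filter.Tendsto.neg ?_
    refine Real.tendsto_exp_atBot.comp ?_
    have h := (tendsto_pow_atTop (two_ne_zero)).const_mul_atTop_of_neg
      (show (-(1/2) : ℝ) < 0 by norm_num)
    refine h.congr fun r => by ring
  have := integral_Ioi_of_hasDerivAt_of_tendsto' hderiv hint htend
  simpa using this

/-- Sheppard's formula: if `(X, Y)` is standard bivariate normal with correlation
`ρ ∈ (−1, 1)` — realized as `X = U`, `Y = ρ U + √(1−ρ²) V` with `(U, V)` independent
standard normals — then `P(X > 0, Y > 0) = 1/4 + arcsin ρ / (2π)`. -/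
theorem stmt13 (ρ : ℝ) (hρ : ρ ∈ Set.Ioo (-1 : ℝ) 1) :
    ((gaussianReal 0 1).prod (gaussianReal 0 1))
        {p : ℝ × ℝ | 0 < p.1 ∧ 0 < ρ * p.1 + Real.sqrt (1 - ρ ^ 2) * p.2}
      = ENNReal.ofReal (1 / 4 + Real.arcsin ρ / (2 * Real.pi)) := by
  open Real Set in
  obtain ⟨hρ1, hρ2⟩ := hρ
  set α := Real.arcsin ρ with hαdef
  have hα1 : -(π/2) < α := Real.neg_pi_div_two_lt_arcsin.mpr hρ1
  have hα2 : α < π/2 := Real.arcsin_lt_pi_div_two.mpr hρ2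
  have hsinα : Real.sin α = ρ := Real.sin_arcsin hρ1.le hρ2.le
  have hcosα : Real.cos α = Real.sqrt (1 - ρ ^ 2) := Real.cos_arcsin ρ
  have hπ : (0:ℝ) < π := Real.pi_pos
  set φ : ℝ → ℝ := gaussianPDFReal 0 1 with hφdef
  set S : Set (ℝ × ℝ) := {p : ℝ × ℝ | 0 < p.1 ∧ 0 < ρ * p.1 + Real.sqrt (1 - ρ ^ 2) * p.2}
    with hSdef
  have hS : MeasurableSet S := by
    apply MeasurableSet.inter
    · exact measurableSet_lt measurable_const measurable_fst
    · exact measurableSet_lt measurable_const ((measurable_const.mul measurable_fst).add (measurable_const.mul measurable_snd))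
  set T : Set (ℝ × ℝ) := Ioi (0:ℝ) ×ˢ Ioo (-α) (π/2) with hTdef
  have hT : MeasurableSet T := measurableSet_Ioi.prod measurableSet_Ioo
  have hTsub : T ⊆ polarCoord.target := by
    rw [polarCoord_target]
    rintro ⟨r, θ⟩ ⟨h1, h2⟩
    exact ⟨h1, by constructor <;> [linarith [h2.1]; linarith [h2.2]]⟩
  -- product measure has density φ p.1 * φ p.2
  have hprod : (gaussianReal 0 1).prod (gaussianReal 0 1)
      = (volume : Measure (ℝ × ℝ)).withDensity
        (fun p => gaussianPDF 0 1 p.1 * gaussianPDF 0 1 p.2) := by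
    refine Measure.prod_eq fun s t hs ht => ?_
    rw [withDensity_apply _ (hs.prod ht),
      gaussianReal_of_var_ne_zero _ one_ne_zero, withDensity_apply _ hs,
      withDensity_apply _ ht]
    rw [Measure.volume_eq_prod, ← Measure.prod_restrict]
    exact lintegral_prod_mul ((measurable_gaussianPDF 0 1).aemeasurable)
      ((measurable_gaussianPDF 0 1).aemeasurable)
  have hφnn : ∀ x, 0 ≤ φ x := fun x => gaussianPDFReal_nonneg 0 1 x
  have hInt : Integrable (fun p : ℝ × ℝ => φ p.1 * φ p.2) := by
    rw [Measure.volume_eq_prod]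
    exact (integrable_gaussianPDFReal 0 1).mul_prod (integrable_gaussianPDFReal 0 1)
  have h1 : ((gaussianReal 0 1).prod (gaussianReal 0 1)) S
      = ENNReal.ofReal (∫ p in S, φ p.1 * φ p.2) := by
    rw [hprod, withDensity_apply _ hS]
    rw [ofReal_integral_eq_lintegral_ofReal hInt.integrableOn
      (Filter.Eventually.of_forall fun p => mul_nonneg (hφnn _) (hφnn _))]
    congr 1 with p
    rw [ENNReal.ofReal_mul (hφnn _)]
    rfl
  rw [h1]
  -- key pointwise identity on the polar target
  have hval : ∀ a b : ℝ, a ^ 2 + b ^ 2 = 1 → ∀ r : ℝ,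
      φ (r * a) * φ (r * b) = (2 * π)⁻¹ * Real.exp (-r ^ 2 / 2) := by
    intro a b hab r
    simp only [hφdef, gaussianPDFReal, NNReal.coe_one, mul_one, sub_zero, one_div]
    rw [mul_mul_mul_comm, ← Real.exp_add, ← mul_inv,
      Real.mul_self_sqrt (by positivity : (0:ℝ) ≤ 2*π)]
    have h : (r * a) ^ 2 + (r * b) ^ 2 = r ^ 2 := by
      have h2 : (r * a) ^ 2 + (r * b) ^ 2 = r ^ 2 * (a ^ 2 + b ^ 2) := by ring
      rw [h2, hab, mul_one]
    have h3 : -(r * a) ^ 2 / 2 + -(r * b) ^ 2 / 2 = -r ^ 2 / 2 := by linarith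
    rw [h3]
  have hIndic : ∀ p ∈ polarCoord.target,
      p.1 • (S.indicator (fun q : ℝ × ℝ => φ q.1 * φ q.2) (polarCoord.symm p))
        = T.indicator (fun q : ℝ × ℝ => q.1 * ((2 * π)⁻¹ * Real.exp (-q.1 ^ 2 / 2))) p := by
    rintro ⟨r, θ⟩ hp
    rw [polarCoord_target] at hp
    obtain ⟨hr, hθ⟩ := hp
    simp only [mem_Ioi] at hr
    simp only [mem_Ioo] at hθ
    have hsymm : polarCoord.symm (r, θ) = (r * Real.cos θ, r * Real.sin θ) := by
      rw [polarCoord_symm_apply]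
    have hkey : polarCoord.symm (r, θ) ∈ S ↔ (r, θ) ∈ T := by
      rw [hsymm, hSdef, hTdef]
      simp only [mem_setOf_eq, mem_prod, mem_Ioi, mem_Ioo]
      have e2 : ρ * (r * Real.cos θ) + Real.sqrt (1 - ρ ^ 2) * (r * Real.sin θ)
          = r * Real.sin (θ + α) := by
        rw [Real.sin_add, hsinα, hcosα]; ring
      rw [e2]
      constructor
      · rintro ⟨h1, h2⟩
        have hcos : 0 < Real.cos θ := by nlinarith
        have hsin : 0 < Real.sin (θ + α) := by nlinarith
        have hθπ2 : θ < π/2 := by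
          by_contra h
          push_neg at h
          exact absurd (Real.cos_nonpos_of_pi_div_two_le_of_le h (by linarith [hθ.2]))
            (not_le.mpr hcos)
        have hθmπ2 : -(π/2) < θ := by
          by_contra h
          push_neg at h
          have h' : Real.cos (-θ) ≤ 0 :=
            Real.cos_nonpos_of_pi_div_two_le_of_le (by linarith) (by linarith [hθ.1])
          rw [Real.cos_neg] at h'
          linarith
        have htα : 0 < θ + α := by
          by_contra h
          push_neg at h
          have h' : Real.sin (θ + α) ≤ 0 :=
            Real.sin_nonpos_of_nonpos_of_neg_pi_le h (by linarith)
          linarith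
        exact ⟨hr, by linarith, hθπ2⟩
      · rintro ⟨h1, h2, h3⟩
        have hcos : 0 < Real.cos θ := Real.cos_pos_of_mem_Ioo ⟨by linarith, h3⟩
        have hsin : 0 < Real.sin (θ + α) :=
          Real.sin_pos_of_pos_of_lt_pi (by linarith) (by linarith)
        exact ⟨mul_pos hr hcos, mul_pos hr hsin⟩
    by_cases hmem : polarCoord.symm (r, θ) ∈ S
    · rw [Set.indicator_of_mem hmem, Set.indicator_of_mem (hkey.mp hmem), hsymm]
      have := hval (Real.cos θ) (Real.sin θ) (Real.cos_sq_add_sin_sq θ) r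
      simp only [smul_eq_mul]
      rw [this]
    · rw [Set.indicator_of_notMem hmem, Set.indicator_of_notMem (fun h => hmem (hkey.mpr h))]
      simp
  -- compute the integral via polar coordinates
  have h2 : (∫ p in S, φ p.1 * φ p.2)
      = ∫ p in polarCoord.target,
          T.indicator (fun q : ℝ × ℝ => q.1 * ((2 * π)⁻¹ * Real.exp (-q.1 ^ 2 / 2))) p := by
    rw [← integral_indicator hS, ← integral_comp_polarCoord_symm]
    exact setIntegral_congr_fun polarCoord.open_target.measurableSet hIndic
  rw [h2, setIntegral_indicator hT, Set.inter_eq_self_of_subset_right hTsub]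
  have h3 : (∫ p in T, p.1 * ((2 * π)⁻¹ * Real.exp (-p.1 ^ 2 / 2)))
      = (∫ r in Ioi (0:ℝ), r * ((2 * π)⁻¹ * Real.exp (-r ^ 2 / 2)))
        * ∫ θ in Ioo (-α) (π/2), (1:ℝ) := by
    rw [hTdef, Measure.volume_eq_prod, ← setIntegral_prod_mul]
    simp
  rw [h3]
  have h4 : (∫ r in Ioi (0:ℝ), r * ((2 * π)⁻¹ * Real.exp (-r ^ 2 / 2))) = (2 * π)⁻¹ := by
    have : ∀ r : ℝ, r * ((2 * π)⁻¹ * Real.exp (-r ^ 2 / 2))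
        = (2 * π)⁻¹ * (r * Real.exp (-r ^ 2 / 2)) := fun r => by ring
    simp_rw [this]
    rw [integral_const_mul, radial_integral13, mul_one]
  have h5 : (∫ θ in Ioo (-α) (π/2), (1:ℝ)) = π/2 + α := by
    simp only [integral_const, smul_eq_mul, mul_one]
    rw [measureReal_def, Measure.restrict_apply_univ, Real.volume_Ioo, ENNReal.toReal_ofReal (by linarith)]
    ring
  rw [h4, h5]
  congr 1
  field_simp
  ring
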